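/- Let C be a p×n integer matrix whose rows are linearly independent over ℚ, with p ≤ n, and let Δ ≥ 1 be an integer such that the determinant of every square submatrix of C has absolute value at most Δ. Then there exist integer vectors y_1, …, y_{n−p} ∈ ℤⁿ which are linearly independent over ℚ, satisfy C·y_i = 0 for every i, and satisfy ‖y_i‖∞ ≤ Δ² for every i; in particular they form a basis of the rational nullspace of C. -/

import Mathlib

open Matrix

lemma aux_cols (n p : ℕ) (A : Matrix (Fin p) (Fin n) ℚ)
    (h : LinearIndependent ℚ (fun l => A l)) :
    ∃ γ : Fin p → Fin n, Function.Injective γ ∧ IsUnit (A.submatrix id γ).det := by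
  classical
  have hrank : A.rank = p := by simpa using h.rank_matrix
  have hspan : Submodule.span ℚ (Set.range Aᵀ) = ⊤ := by
    apply Submodule.eq_top_of_finrank_eq
    rw [show Set.range Aᵀ = Set.range A.col from rfl, ← A.rank_eq_finrank_span_cols, hrank]
    simp [Module.finrank_fintype_fun_eq_card]
  obtain ⟨b, hbsub, hbspan, hbli⟩ := exists_linearIndependent ℚ (Set.range Aᵀ)
  rw [hspan] at hbspan
  have hbfin : b.Finite := hbli.setFinite
  haveI : Fintype b := hbfin.fintype
  have hbasis : Nonempty (Module.Basis b ℚ (Fin p → ℚ)) :=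
    ⟨Module.Basis.mk hbli (by rw [Subtype.range_coe, hbspan])⟩
  have hcard : Fintype.card b = p := by
    obtain ⟨B⟩ := hbasis
    have := Module.finrank_eq_card_basis B
    simpa [Module.finrank_fintype_fun_eq_card] using this.symm
  have hf : ∀ v : b, ∃ j : Fin n, Aᵀ j = (v : Fin p → ℚ) := fun v => hbsub v.2
  choose f hfs using hf
  have hfinj : Function.Injective f := by
    intro v w hvw
    have : (v : Fin p → ℚ) = w := by rw [← hfs v, ← hfs w, hvw]
    exact Subtype.ext this
  let e : Fin p ≃ b := (Fintype.equivFinOfCardEq hcard).symm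
  refine ⟨f ∘ e, hfinj.comp e.injective, ?_⟩
  rw [← isUnit_iff_isUnit_det, ← linearIndependent_cols_iff_isUnit]
  have : (fun k => (A.submatrix id (f ∘ e))ᵀ k) = fun k => ((e k : Fin p → ℚ)) := by
    funext k
    rw [← hfs (e k)]
    rfl
  show LinearIndependent ℚ (fun k => (A.submatrix id (f ∘ e))ᵀ k)
  rw [this]
  exact hbli.comp e e.injective

theorem stmt_6 (n p : ℕ) (hpn : p ≤ n) (Δ : ℕ) (hΔ : 1 ≤ Δ)
    (C : Matrix (Fin p) (Fin n) ℤ)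
    (hrows : LinearIndependent ℚ (fun l => fun i => ((C l i : ℤ) : ℚ)))
    (hdet : ∀ (k : ℕ) (ρ : Fin k → Fin p) (γ : Fin k → Fin n),
      |(C.submatrix ρ γ).det| ≤ (Δ : ℤ)) :
    ∃ y : Fin (n - p) → Fin n → ℤ,
      LinearIndependent ℚ (fun i => fun j => ((y i j : ℤ) : ℚ)) ∧
      (∀ i, C.mulVec (y i) = 0) ∧
      (∀ i j, |y i j| ≤ (Δ : ℤ) ^ 2) := by
  classical
  -- cast matrix
  set A : Matrix (Fin p) (Fin n) ℚ := C.map (Int.cast : ℤ → ℚ) with hA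
  have hAli : LinearIndependent ℚ (fun l => A l) := hrows
  obtain ⟨γ, hγinj, hγunit⟩ := aux_cols n p A hAli
  set M : Matrix (Fin p) (Fin p) ℤ := C.submatrix id γ with hM
  have hdetcast : ((M.det : ℤ) : ℚ) = (A.submatrix id γ).det :=
    RingHom.map_det (Int.castRingHom ℚ) M
  have hMdet : M.det ≠ 0 := by
    intro h0
    apply hγunit.ne_zero
    rw [← hdetcast, h0]
    norm_num
  -- complement of the range of γ
  set T : Finset (Fin n) := (Finset.univ.image γ)ᶜ with hT
  have hTcard : T.card = n - p := by
    rw [hT, Finset.card_compl, Finset.card_image_of_injective _ hγinj]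
    simp
  set δ : Fin (n - p) → Fin n := fun i => (T.orderIsoOfFin hTcard i : Fin n) with hδ
  have hδinj : Function.Injective δ := fun i j hij =>
    (T.orderIsoOfFin hTcard).injective (Subtype.ext hij)
  have hδT : ∀ i, δ i ∈ T := fun i => (T.orderIsoOfFin hTcard i).2
  have hδγ : ∀ i k, γ k ≠ δ i := by
    intro i k hk
    have := hδT i
    rw [hT, Finset.mem_compl] at this
    exact this (Finset.mem_image.mpr ⟨k, Finset.mem_univ k, hk⟩)
  -- the nullspace vectors
  set c : Fin (n - p) → Fin p → ℤ := fun i l => C l (δ i) with hc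
  set x : Fin (n - p) → Fin p → ℤ := fun i => M.cramer (c i) with hx
  set y : Fin (n - p) → Fin n → ℤ :=
    fun i => M.det • Pi.single (δ i) 1 - ∑ k, Pi.single (γ k) (x i k) with hy
  -- entry description
  have hyval : ∀ i j, y i j =
      if j = δ i then M.det else if h : ∃ k, γ k = j then -(x i h.choose) else 0 := by
    intro i j
    rw [hy]
    simp only [Pi.sub_apply, Pi.smul_apply, Finset.sum_apply, smul_eq_mul]
    by_cases hji : j = δ i
    · rw [if_pos hji, hji, Pi.single_eq_same, mul_one]
      have : ∀ k ∈ Finset.univ, (Pi.single (γ k) (x i k) : Fin n → ℤ) (δ i) = 0 := by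
        intro k _
        exact Pi.single_eq_of_ne (hδγ i k).symm _
      rw [Finset.sum_congr rfl this]
      simp
    · rw [if_neg hji, Pi.single_eq_of_ne hji, mul_zero]
      by_cases hk : ∃ k, γ k = j
      · rw [dif_pos hk]
        have hsum : ∑ k, (Pi.single (γ k) (x i k) : Fin n → ℤ) j = x i hk.choose := by
          rw [Finset.sum_eq_single hk.choose]
          · rw [hk.choose_spec, Pi.single_eq_same]
          · intro k _ hkne
            apply Pi.single_eq_of_ne
            intro h
            exact hkne (hγinj (h.symm.trans hk.choose_spec.symm))
          · intro h; exact absurd (Finset.mem_univ _) h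
        rw [hsum]; ring
      · rw [dif_neg hk]
        have : ∀ k ∈ Finset.univ, (Pi.single (γ k) (x i k) : Fin n → ℤ) j = 0 := by
          intro k _
          exact Pi.single_eq_of_ne (fun h => hk ⟨k, h.symm⟩) _
        rw [Finset.sum_congr rfl this]
        simp
  refine ⟨y, ?_, ?_, ?_⟩
  · -- linear independence
    apply LinearIndependent.of_comp (LinearMap.funLeft ℚ ℚ δ)
    have hMdetQ : ((M.det : ℤ) : ℚ) ≠ 0 := by exact_mod_cast hMdet
    have hcomp : (LinearMap.funLeft ℚ ℚ δ) ∘ (fun i => fun j => ((y i j : ℤ) : ℚ))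
        = fun i => ((M.det : ℚ) • (Pi.single i (1:ℚ) : Fin (n-p) → ℚ)) := by
      funext i i'
      simp only [Function.comp_apply, LinearMap.funLeft_apply, Pi.smul_apply, smul_eq_mul]
      rw [hyval]
      by_cases hii : i' = i
      · subst hii
        rw [if_pos rfl, Pi.single_eq_same, mul_one]
      · have h1 : δ i' ≠ δ i := fun h => hii (hδinj h)
        have h2 : ¬ ∃ k, γ k = δ i' := fun ⟨k, hk⟩ => hδγ i' k hk
        rw [if_neg h1, dif_neg h2, Pi.single_eq_of_ne hii]
        simp
    rw [hcomp]
    have hb := (Pi.basisFun ℚ (Fin (n - p))).linearIndependent.units_smul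
        (fun _ => Units.mk0 ((M.det : ℚ)) hMdetQ)
    convert hb using 1
    funext i
    simp [Units.smul_def, Pi.basisFun_apply]
  · -- nullspace
    intro i
    have : C.mulVec (y i) =
        M.det • C.mulVec (Pi.single (δ i) 1) - ∑ k, C.mulVec (Pi.single (γ k) (x i k)) := by
      rw [hy]
      simp only [← Matrix.mulVecLin_apply]
      rw [map_sub, _root_.map_smul, map_sum]
    rw [this]
    funext l
    simp only [Pi.sub_apply, Pi.smul_apply, Finset.sum_apply, Matrix.mulVec_single,
      smul_eq_mul, mul_one, op_smul_eq_mul, Matrix.col_apply]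
    have hMx : ∑ k, C l (γ k) * x i k = M.det * c i l := by
      have := congrFun (Matrix.mulVec_cramer M (c i)) l
      simp only [Matrix.mulVec, dotProduct] at this
      exact this
    rw [hMx]
    simp [hc]
  · -- bounds
    intro i j
    have hΔsq : (Δ : ℤ) ≤ (Δ : ℤ) ^ 2 := by nlinarith [Int.ofNat_le.mpr hΔ]
    rw [hyval]
    split_ifs with h1 h2
    · exact le_trans (hdet p id γ) hΔsq
    · -- x i k bound
      rw [abs_neg]
      have hxval : x i h2.choose = (C.submatrix id (Function.update γ h2.choose (δ i))).det := by
        show (M.cramer (c i)) h2.choose = _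
        rw [Matrix.cramer_apply]
        congr 1
        ext l m
        by_cases hm : m = h2.choose
        · subst hm
          simp [Matrix.updateCol_apply, Function.update_apply, hc]
        · simp [Matrix.updateCol_apply, Function.update_apply, hm, hM]
      rw [hxval]
      exact le_trans (hdet p id _) hΔsq
    · simp only [abs_zero]
      exact le_trans (by positivity : (0:ℤ) ≤ (Δ:ℤ)) hΔsq
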